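/- Let η be a smooth function of a real variable (thought of as the mean curvature along the normal direction of a surface in a 3-dimensional space form of curvature σ), satisfying the Riccati-type recursion coming from ∇_N S = S² + σI for a 2×2 traceless symmetric family S(t): η^{(2k)} is a linear combination of traces tr(S^{2j+1}) (j = 0,…,k) and η^{(2k+1)} is a linear combination of traces tr(S^{2j}) (j = 0,…,k+1). Consequently, if S(0) is traceless then all even-order derivatives η^{(2k)}(0) vanish. -/

import Mathlib

open Finset

-- pairing lemma
theorem aux_pair (g : ℕ → ℝ) : ∀ n : ℕ, ∑ j ∈ range (2 * n), g j
    = ∑ i ∈ range n, (g (2 * i) + g (2 * i + 1)) := by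
  intro n
  induction n with
  | zero => simp
  | succ n ih =>
    rw [show 2 * (n + 1) = 2 * n + 1 + 1 by omega, sum_range_succ, sum_range_succ,
      sum_range_succ, ih]
    ring

-- traceless symmetric 2x2: odd power traces vanish
theorem aux_traceless (A : Matrix (Fin 2) (Fin 2) ℝ) (hs : A.IsSymm) (h0 : A.trace = 0) :
    ∀ j : ℕ, (A ^ (2 * j + 1)).trace = 0 := by
  intro j
  have hsym : A 1 0 = A 0 1 := by
    have := congrFun (congrFun hs.eq 1) 0
    simpa [Matrix.transpose_apply] using this.symm
  have htr : A 1 1 = - A 0 0 := by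
    rw [Matrix.trace_fin_two] at h0; linarith
  have h2 : A ^ 2 = (A 0 0 ^ 2 + A 0 1 ^ 2) • (1 : Matrix (Fin 2) (Fin 2) ℝ) := by
    ext i k
    rw [pow_two]
    fin_cases i <;> fin_cases k <;>
      simp [Matrix.mul_apply, Fin.sum_univ_two, hsym, htr] <;> ring
  have : A ^ (2 * j + 1) = ((A 0 0 ^ 2 + A 0 1 ^ 2) ^ j) • A := by
    rw [pow_succ, pow_mul, h2, smul_pow, one_pow, smul_mul_assoc, one_mul]
  rw [this, Matrix.trace_smul, h0, smul_zero]

open Finset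

-- derivative of entries of S^(n+1)
theorem aux_pow (σ : ℝ) (S : ℝ → Matrix (Fin 2) (Fin 2) ℝ)
    (hODE : ∀ t i j, HasDerivAt (fun s => S s i j)
      ((S t ^ 2 + σ • (1 : Matrix (Fin 2) (Fin 2) ℝ)) i j) t) :
    ∀ (n : ℕ) (t : ℝ) (i j : Fin 2),
      HasDerivAt (fun s => (S s ^ (n + 1)) i j)
        ((((n : ℝ) + 1) • (S t ^ (n + 2) + σ • S t ^ n)) i j) t := by
  intro n
  induction n with
  | zero =>
    intro t i j
    simpa [pow_one] using hODE t i j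
  | succ n ih =>
    intro t i j
    have key : (fun s => (S s ^ (n + 2)) i j)
        = fun s => ∑ k, (S s ^ (n + 1)) i k * S s k j := by
      funext s
      simp [pow_succ, Matrix.mul_apply]
    rw [show n + 1 + 1 = n + 2 by omega, key]
    have H : HasDerivAt (fun s => ∑ k, (S s ^ (n + 1)) i k * S s k j)
        (∑ k, ((((n : ℝ) + 1) • (S t ^ (n + 2) + σ • S t ^ n)) i k * S t k j
          + (S t ^ (n + 1)) i k * (S t ^ 2 + σ • (1 : Matrix (Fin 2) (Fin 2) ℝ)) k j)) t := by
      apply HasDerivAt.fun_sum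
      intro k _
      exact (ih t i k).mul (hODE t k j)
    convert H using 1
    have : (∑ k, ((((n : ℝ) + 1) • (S t ^ (n + 2) + σ • S t ^ n)) i k * S t k j
          + (S t ^ (n + 1)) i k * (S t ^ 2 + σ • (1 : Matrix (Fin 2) (Fin 2) ℝ)) k j))
        = ((((n : ℝ) + 1) • (S t ^ (n + 2) + σ • S t ^ n)) * S t
          + S t ^ (n + 1) * (S t ^ 2 + σ • (1 : Matrix (Fin 2) (Fin 2) ℝ))) i j := by
      simp [Matrix.add_apply, Matrix.mul_apply, Finset.sum_add_distrib, Fin.sum_univ_two]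
      ring
    rw [this]
    have hmat : ((((n : ℝ) + 1) • (S t ^ (n + 2) + σ • S t ^ n)) * S t
          + S t ^ (n + 1) * (S t ^ 2 + σ • (1 : Matrix (Fin 2) (Fin 2) ℝ)))
        = (((n : ℝ) + 1 + 1) • (S t ^ (n + 2 + 1) + σ • S t ^ (n + 1))) := by
      have h1 : S t ^ (n + 2) * S t = S t ^ (n + 2 + 1) := (pow_succ _ _).symm
      have h2 : S t ^ n * S t = S t ^ (n + 1) := (pow_succ _ _).symm
      have h3 : S t ^ (n + 1) * S t ^ 2 = S t ^ (n + 2 + 1) := by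
        rw [← pow_add]
      rw [smul_mul_assoc, add_mul, smul_mul_assoc, h1, h2,
        mul_add (S t ^ (n + 1)), mul_smul_comm, mul_one, h3]
      module
    rw [hmat]
    norm_num

-- derivative of trace of S^n
theorem aux_trace (σ : ℝ) (S : ℝ → Matrix (Fin 2) (Fin 2) ℝ)
    (hODE : ∀ t i j, HasDerivAt (fun s => S s i j)
      ((S t ^ 2 + σ • (1 : Matrix (Fin 2) (Fin 2) ℝ)) i j) t) :
    ∀ (n : ℕ) (t : ℝ),
      HasDerivAt (fun s => (S s ^ n).trace)
        ((n : ℝ) * ((S t ^ (n + 1)).trace + σ * (S t ^ (n - 1)).trace)) t := by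
  intro n t
  match n with
  | 0 => simpa using hasDerivAt_const t ((1 : Matrix (Fin 2) (Fin 2) ℝ)).trace
  | (n + 1) =>
    have key : (fun s => (S s ^ (n + 1)).trace) = fun s => ∑ i, (S s ^ (n + 1)) i i := by
      funext s; rfl
    rw [key]
    have H : HasDerivAt (fun s => ∑ i, (S s ^ (n + 1)) i i)
        (∑ i, (((n : ℝ) + 1) • (S t ^ (n + 2) + σ • S t ^ n)) i i) t :=
      HasDerivAt.fun_sum (fun i _ => aux_pow σ S hODE n t i i)
    convert H using 1
    have : (∑ i, (((n : ℝ) + 1) • (S t ^ (n + 2) + σ • S t ^ n)) i i)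
        = (((n : ℝ) + 1) • (S t ^ (n + 2) + σ • S t ^ n)).trace := rfl
    rw [this, Matrix.trace_smul, Matrix.trace_add, Matrix.trace_smul]
    push_cast
    simp only [Nat.add_sub_cancel, smul_eq_mul]


theorem aux_main (σ : ℝ) (S : ℝ → Matrix (Fin 2) (Fin 2) ℝ)
    (hODE : ∀ t i j, HasDerivAt (fun s => S s i j)
      ((S t ^ 2 + σ • (1 : Matrix (Fin 2) (Fin 2) ℝ)) i j) t)
    (hT : ∀ (n : ℕ) (t : ℝ),
      HasDerivAt (fun s => (S s ^ n).trace)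
        ((n : ℝ) * ((S t ^ (n + 1)).trace + σ * (S t ^ (n - 1)).trace)) t) :
    ∀ m : ℕ, ∃ c : ℕ → ℝ, (∀ j, (j + m) % 2 = 0 → c j = 0) ∧ ∀ t : ℝ,
      iteratedDeriv m (fun s => (S s).trace) t
        = ∑ j ∈ range (m + 2), c j * (S t ^ j).trace := by
  intro m
  induction m with
  | zero =>
    refine ⟨fun j => if j = 1 then 1 else 0, ?_, ?_⟩
    · intro j hj
      have : j ≠ 1 := by omega
      simp [this]
    · intro t
      simp [iteratedDeriv_zero, Finset.sum_range_succ]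
  | succ m ih =>
    obtain ⟨c, hpar, hval⟩ := ih
    refine ⟨fun i => (if i = 0 then 0 else c (i - 1) * (i - 1 : ℕ))
      + (if i < m + 1 then c (i + 1) * ((i + 1 : ℕ) * σ) else 0), ?_, ?_⟩
    · intro j hj
      have e1 : j ≠ 0 → ((j - 1) + m) % 2 = 0 := by omega
      have e2 : ((j + 1) + m) % 2 = 0 := by omega
      rcases Nat.eq_zero_or_pos j with h | h
      · simp [h, hpar 1 (by omega)]
      · simp [hpar (j - 1) (e1 (by omega)), hpar (j + 1) e2]
    · intro t
      have hfun : iteratedDeriv m (fun s => (S s).trace)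
          = fun t => ∑ j ∈ range (m + 2), c j * (S t ^ j).trace := funext hval
      rw [iteratedDeriv_succ, hfun]
      have H : HasDerivAt (fun t => ∑ j ∈ range (m + 2), c j * (S t ^ j).trace)
          (∑ j ∈ range (m + 2),
            c j * ((j : ℝ) * ((S t ^ (j + 1)).trace + σ * (S t ^ (j - 1)).trace))) t :=
        HasDerivAt.fun_sum (fun j _ => (hT j t).const_mul (c j))
      rw [H.deriv]
      -- now the sum reshuffling
      have split : ∀ j, c j * ((j : ℝ) * ((S t ^ (j + 1)).trace + σ * (S t ^ (j - 1)).trace))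
          = c j * (j : ℕ) * (S t ^ (j + 1)).trace + c j * ((j : ℕ) * σ) * (S t ^ (j - 1)).trace := by
        intro j; push_cast; ring
      rw [Finset.sum_congr rfl (fun j _ => split j), Finset.sum_add_distrib]
      have L1 : ∑ j ∈ range (m + 2), c j * (j : ℕ) * (S t ^ (j + 1)).trace
          = ∑ i ∈ range (m + 3),
              (if i = 0 then 0 else c (i - 1) * ((i - 1 : ℕ) : ℝ)) * (S t ^ i).trace := by
        rw [Finset.sum_range_succ' (fun i =>
          (if i = 0 then 0 else c (i - 1) * ((i - 1 : ℕ) : ℝ)) * (S t ^ i).trace) (m + 2)]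
        simp
      have L2 : ∑ j ∈ range (m + 2), c j * ((j : ℕ) * σ) * (S t ^ (j - 1)).trace
          = ∑ i ∈ range (m + 3),
              (if i < m + 1 then c (i + 1) * (((i + 1 : ℕ) : ℝ) * σ) else 0) * (S t ^ i).trace := by
        rw [Finset.sum_range_succ (fun i =>
          (if i < m + 1 then c (i + 1) * (((i + 1 : ℕ) : ℝ) * σ) else 0) * (S t ^ i).trace) (m + 2),
          Finset.sum_range_succ (fun i =>
          (if i < m + 1 then c (i + 1) * (((i + 1 : ℕ) : ℝ) * σ) else 0) * (S t ^ i).trace) (m + 1)]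
        rw [if_neg (by omega), if_neg (by omega)]
        rw [Finset.sum_range_succ' (fun j => c j * ((j : ℕ) * σ) * (S t ^ (j - 1)).trace) (m + 1)]
        simp only [Nat.cast_zero, zero_mul, mul_zero, add_zero, Nat.add_sub_cancel]
        apply Finset.sum_congr rfl
        intro i hi
        rw [if_pos (Finset.mem_range.mp hi)]
      rw [L1, L2, ← Finset.sum_add_distrib]
      apply Finset.sum_congr rfl
      intro i _
      ring

/-- Let `S(t)` be a smooth family of symmetric 2×2 real matrices satisfying the
Riccati equation `S' = S² + σ·I` (coming from `∇_N S = S² + σI` in a space form of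
curvature `σ`), and let `η(t) = tr S(t)`.  Then every even-order derivative
`η^{(2k)}` is a linear combination of the traces `tr(S^{2j+1})`, `j = 0,…,k`, every
odd-order derivative `η^{(2k+1)}` is a linear combination of the traces `tr(S^{2j})`,
`j = 0,…,k+1`; consequently, if `S(0)` is traceless, then all even-order derivatives
`η^{(2k)}(0)` vanish. -/
theorem even_derivatives_of_mean_curvature_vanish
    (σ : ℝ) (S : ℝ → Matrix (Fin 2) (Fin 2) ℝ)
    (hsmooth : ∀ i j, ContDiff ℝ (⊤ : ℕ∞) fun t => S t i j)
    (hsymm : ∀ t, (S t).IsSymm)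
    (hODE : ∀ t i j, HasDerivAt (fun s => S s i j)
      ((S t ^ 2 + σ • (1 : Matrix (Fin 2) (Fin 2) ℝ)) i j) t) :
    (∀ k : ℕ, ∃ a : ℕ → ℝ, ∀ t : ℝ,
        iteratedDeriv (2 * k) (fun s => (S s).trace) t
          = ∑ j ∈ range (k + 1), a j * (S t ^ (2 * j + 1)).trace)
      ∧ (∀ k : ℕ, ∃ b : ℕ → ℝ, ∀ t : ℝ,
        iteratedDeriv (2 * k + 1) (fun s => (S s).trace) t
          = ∑ j ∈ range (k + 2), b j * (S t ^ (2 * j)).trace)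
      ∧ ((S 0).trace = 0 → ∀ k : ℕ,
        iteratedDeriv (2 * k) (fun s => (S s).trace) 0 = 0) := by
  have hT := aux_trace σ S hODE
  have hmain := aux_main σ S hODE hT
  have P1 : ∀ k : ℕ, ∃ a : ℕ → ℝ, ∀ t : ℝ,
      iteratedDeriv (2 * k) (fun s => (S s).trace) t
        = ∑ j ∈ range (k + 1), a j * (S t ^ (2 * j + 1)).trace := by
    intro k
    obtain ⟨c, hpar, hval⟩ := hmain (2 * k)
    refine ⟨fun j => c (2 * j + 1), ?_⟩
    intro t
    rw [hval t, show 2 * k + 2 = 2 * (k + 1) by ring,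
      aux_pair (fun j => c j * (S t ^ j).trace) (k + 1)]
    apply Finset.sum_congr rfl
    intro i _
    simp [hpar (2 * i) (by omega)]
  refine ⟨P1, ?_, ?_⟩
  · intro k
    obtain ⟨c, hpar, hval⟩ := hmain (2 * k + 1)
    refine ⟨fun j => c (2 * j), ?_⟩
    intro t
    rw [hval t, show 2 * k + 1 + 2 = 2 * (k + 1) + 1 by ring,
      Finset.sum_range_succ (fun j => c j * (S t ^ j).trace) (2 * (k + 1)),
      aux_pair (fun j => c j * (S t ^ j).trace) (k + 1),
      Finset.sum_range_succ (fun j => c (2 * j) * (S t ^ (2 * j)).trace) (k + 1)]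
    congr 1
    apply Finset.sum_congr rfl
    intro i _
    simp [hpar (2 * i + 1) (by omega)]
  · intro h0 k
    obtain ⟨a, ha⟩ := P1 k
    rw [ha 0]
    apply Finset.sum_eq_zero
    intro j _
    rw [aux_traceless (S 0) (hsymm 0) h0 j, mul_zero]
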